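/- Fix m and k with 2k ≤ m, and let g : {0,…,k} → ℕ be a nondecreasing counting function with g(0) = 0 defining the top-k-counting committee scoring rule R. Suppose (i) g is not constant, and (ii) for all nonnegative integers k₁, k₂ with k₁ + k₂ ≤ k, g(k) − g(k−k₂) ≥ g(k₁+k₂) − g(k₁). Then R satisfies the fixed-majority criterion for m candidates and committee size k: in any election where strictly more than half of the voters rank all members of a size-k committee M in their top k positions, M has strictly higher score than every other size-k committee. -/

import Mathlib

private lemma fm_sum_aux {α : Type*} (a b : α → ℕ) (p : α → Bool) (D : ℕ) :
    ∀ L : List α,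
      (∀ v ∈ L, a v + (if p v then D else 0) ≤ b v + (if p v then 0 else D)) →
      (L.map a).sum + D * L.countP p ≤ (L.map b).sum + D * (L.length - L.countP p) := by
  intro L
  induction L with
  | nil => simp
  | cons v L ih =>
    intro h
    have h1 := h v List.mem_cons_self
    have h2 := ih (fun w hw => h w (List.mem_cons_of_mem _ hw))
    have hcl : L.countP p ≤ L.length := L.countP_le_length
    simp only [List.map_cons, List.sum_cons, List.countP_cons, List.length_cons]
    cases hv : p v
    · simp only [hv, Bool.false_eq_true, if_false, Nat.add_zero]
      have he : L.length + 1 - L.countP p = (L.length - L.countP p) + 1 := by omega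
      rw [he, Nat.mul_succ]
      simp only [hv, Bool.false_eq_true, if_false] at h1
      omega
    · simp only [hv, if_true, Nat.add_zero]
      rw [Nat.mul_succ]
      have he : L.length + 1 - (L.countP p + 1) = L.length - L.countP p := by omega
      rw [he]
      simp only [hv, if_true] at h1
      omega

/-- sufficiency direction of the characterization. A
top-k-counting rule whose counting function `g` is non-constant and satisfies
the relaxed-convexity condition satisfies the fixed-majority criterion: a
committee supported by a strict majority beats every other committee.
A voter is a bijection from candidates to 0-indexed positions; the top-k set
of voter `v` is the set of candidates with position `< k`. -/
theorem relaxed_convexity_implies_fixed_majority (m k : ℕ) (hmk : 2 * k ≤ m)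
    (g : ℕ → ℕ) (hg0 : g 0 = 0) (hmono : ∀ t < k, g t ≤ g (t + 1))
    (hnc : ¬ ∀ x ≤ k, g x = g 0)
    (hcond : ∀ k₁ k₂ : ℕ, k₁ + k₂ ≤ k → g (k₁ + k₂) - g k₁ ≤ g k - g (k - k₂)) :
    ∀ (V : List (Fin m ≃ Fin m)) (M : Finset (Fin m)), M.card = k →
      V.length < 2 * V.countP (fun v =>
        decide (M ⊆ Finset.univ.filter (fun c => ((v c : ℕ) < k)))) →
      ∀ S : Finset (Fin m), S.card = k → S ≠ M →
        (V.map (fun v =>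
          g ((S ∩ Finset.univ.filter (fun c => ((v c : ℕ) < k))).card))).sum <
        (V.map (fun v =>
          g ((M ∩ Finset.univ.filter (fun c => ((v c : ℕ) < k))).card))).sum := by
  intro V M hM hmaj S hS hSM
  classical
  push_neg at hnc
  obtain ⟨x, hxk, hgx⟩ := hnc
  rw [hg0] at hgx
  have hkm : k ≤ m := by omega
  -- monotonicity of g on [0, k]
  have hmono' : ∀ a b : ℕ, a ≤ b → b ≤ k → g a ≤ g b := by
    intro a b
    induction b with
    | zero => intro hab _; have : a = 0 := by omega
              rw [this]
    | succ n ih =>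
      intro hab hbk
      rcases Nat.eq_or_lt_of_le hab with rfl | h
      · exact le_rfl
      · exact le_trans (ih (by omega) (by omega)) (hmono n (by omega))
  have hk1 : 1 ≤ k := by
    by_contra h
    have hx0 : x = 0 := by omega
    rw [hx0, hg0] at hgx; exact hgx rfl
  have hgk : 0 < g k :=
    lt_of_lt_of_le (Nat.pos_of_ne_zero hgx) (hmono' x k hxk le_rfl)
  -- the last increment is positive
  have hstep : g (k - 1) < g k := by
    by_contra h
    push_neg at h
    have hall : ∀ y, y ≤ k → g y = 0 := by
      intro y
      induction y with
      | zero => intro _; exact hg0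
      | succ n ih =>
        intro hy
        have hc := hcond n 1 (by omega)
        have hm := hmono n (by omega)
        have h0 := ih (by omega)
        omega
    exact absurd (hall k le_rfl) (by omega)
  -- cardinality of the top-k set
  have htopcard : ∀ v : Fin m ≃ Fin m,
      (Finset.univ.filter (fun c => ((v c : ℕ) < k))).card = k := by
    intro v
    have h1 : (Finset.univ.filter (fun c : Fin m => ((v c : ℕ) < k)))
        = (Finset.univ.filter (fun d : Fin m => ((d : ℕ) < k))).image v.symm := by
      ext c
      simp only [Finset.mem_filter, Finset.mem_univ, true_and, Finset.mem_image]
      constructor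
      · intro h; exact ⟨v c, h, by simp⟩
      · rintro ⟨d, hd, rfl⟩; simpa using hd
    have h2 : (Finset.univ.filter (fun d : Fin m => ((d : ℕ) < k)))
        = (Finset.univ : Finset (Fin k)).image (Fin.castLE hkm) := by
      ext d
      simp only [Finset.mem_filter, Finset.mem_univ, true_and, Finset.mem_image]
      constructor
      · intro h; exact ⟨⟨d, h⟩, rfl⟩
      · rintro ⟨y, rfl⟩; exact y.isLt
    rw [h1, Finset.card_image_of_injective _ v.symm.injective, h2,
      Finset.card_image_of_injective _ (Fin.castLE_injective hkm)]
    simp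
  -- j := |S ∩ M| < k
  have hjle : (S ∩ M).card ≤ k := by
    rw [← hS]; exact Finset.card_le_card Finset.inter_subset_left
  have hjk : (S ∩ M).card < k := by
    rcases Nat.eq_or_lt_of_le hjle with heq | h
    · exfalso
      have hSMeq : S ∩ M = S :=
        Finset.eq_of_subset_of_card_le Finset.inter_subset_left (by omega)
      have hSsubM : S ⊆ M := by rw [← hSMeq]; exact Finset.inter_subset_right
      exact hSM (Finset.eq_of_subset_of_card_le hSsubM (by omega))
    · exact h
  have hDpos : g ((S ∩ M).card) < g k :=
    lt_of_le_of_lt (hmono' _ (k - 1) (by omega) (by omega)) hstep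
  set D : ℕ := g k - g ((S ∩ M).card) with hD
  -- the key per-voter inequality
  have claim2 : ∀ v : Fin m ≃ Fin m,
      g ((S ∩ Finset.univ.filter (fun c => ((v c : ℕ) < k))).card) ≤
      g ((M ∩ Finset.univ.filter (fun c => ((v c : ℕ) < k))).card) + D := by
    intro v
    set T := Finset.univ.filter (fun c : Fin m => ((v c : ℕ) < k)) with hT
    have hs_le : (S ∩ T).card ≤ k := by
      rw [← hS]; exact Finset.card_le_card Finset.inter_subset_left
    have ht_le : (M ∩ T).card ≤ k := by
      rw [← hM]; exact Finset.card_le_card Finset.inter_subset_left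
    rcases le_or_gt (S ∩ T).card (M ∩ T).card with hle | hlt
    · exact le_trans (hmono' _ _ hle ht_le) (Nat.le_add_right _ _)
    · -- s > t
      have hi1 : ((S ∩ T) ∩ M).card ≤ (M ∩ T).card := by
        apply Finset.card_le_card
        intro y hy
        simp only [Finset.mem_inter] at hy ⊢
        exact ⟨hy.2, hy.1.2⟩
      have hi2 : ((S ∩ T) ∩ M).card + ((S ∩ T) \ M).card = (S ∩ T).card :=
        Finset.card_inter_add_card_sdiff _ _
      have hi3 : ((S ∩ T) \ M).card ≤ (S \ M).card :=
        Finset.card_le_card (Finset.sdiff_subset_sdiff Finset.inter_subset_left le_rfl)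
      have hi4 : (S ∩ M).card + (S \ M).card = S.card :=
        Finset.card_inter_add_card_sdiff _ _
      -- u := s - t satisfies u + j ≤ k
      have hu : (S ∩ T).card - (M ∩ T).card + (S ∩ M).card ≤ k := by omega
      have htu : (M ∩ T).card + ((S ∩ T).card - (M ∩ T).card) = (S ∩ T).card := by omega
      have hc := hcond (M ∩ T).card ((S ∩ T).card - (M ∩ T).card) (by omega)
      rw [htu] at hc
      have hm1 : g ((S ∩ M).card) ≤ g (k - ((S ∩ T).card - (M ∩ T).card)) :=
        hmono' _ _ (by omega) (by omega)
      have hm2 : g (k - ((S ∩ T).card - (M ∩ T).card)) ≤ g k :=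
        hmono' _ _ (by omega) le_rfl
      have hm3 : g ((M ∩ T).card) ≤ g ((S ∩ T).card) := hmono' _ _ (by omega) hs_le
      omega
  -- pointwise inequality with the if-terms
  set p : (Fin m ≃ Fin m) → Bool := fun v =>
    decide (M ⊆ Finset.univ.filter (fun c => ((v c : ℕ) < k))) with hp
  have hpoint : ∀ v ∈ V,
      g ((S ∩ Finset.univ.filter (fun c => ((v c : ℕ) < k))).card)
        + (if p v then D else 0) ≤
      g ((M ∩ Finset.univ.filter (fun c => ((v c : ℕ) < k))).card)
        + (if p v then 0 else D) := by
    intro v _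
    by_cases hv : M ⊆ Finset.univ.filter (fun c => ((v c : ℕ) < k))
    · have hpv : p v = true := decide_eq_true hv
      rw [hpv]
      simp only [if_true]
      have hMT : M = Finset.univ.filter (fun c => ((v c : ℕ) < k)) :=
        Finset.eq_of_subset_of_card_le hv (by rw [htopcard v, hM])
      rw [← hMT, Finset.inter_self, hM]
      omega
    · have hpv : p v = false := decide_eq_false hv
      rw [hpv]
      simp only [Bool.false_eq_true, if_false]
      simpa using claim2 v
  have key := fm_sum_aux _ _ _ D V hpoint
  have hcl : V.countP p ≤ V.length := V.countP_le_length
  have hDge : 1 ≤ D := by omega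
  have hmul : D * (V.length - V.countP p) + D ≤ D * V.countP p := by
    have h1 : (V.length - V.countP p) + 1 ≤ V.countP p := by omega
    calc D * (V.length - V.countP p) + D = D * ((V.length - V.countP p) + 1) := by ring
      _ ≤ D * V.countP p := Nat.mul_le_mul_left D h1
  omega
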